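/- If 𝒜 is a linear order unbounded above, then cof(𝒜) < 𝔟_𝒜, where 𝔟_𝒜 is the least cardinality of a subset of A^A that is unbounded under eventual domination. -/

import Mathlib

universe u

/-- A family `B` of functions `A → A` is unbounded if no single function eventually dominates
every member of `B`. -/
def Unbdd {A : Type u} [LinearOrder A] (B : Set (A → A)) : Prop :=
  ¬ ∃ h : A → A, ∀ g ∈ B, ∃ j : A, ∀ k : A, j < k → g k < h k

/-- The cofinality of a relation `r`: the least cardinality of an `r`-cofinal subset. -/
noncomputable def rcofin {α : Type u} (r : α → α → Prop) : Cardinal.{u} :=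
  ⨅ S : {S : Set α // ∀ a : α, ∃ b ∈ S, r a b}, Cardinal.mk S.1

/-- The bounding number `𝔟_𝒜`: the least cardinality of an unbounded family in `A^A`. -/
noncomputable def bcard (A : Type u) [LinearOrder A] : Cardinal.{u} :=
  ⨅ B : {B : Set (A → A) // Unbdd B}, Cardinal.mk B.1

/-- If `𝒜` is a linear order unbounded above, then `cof(𝒜) < 𝔟_𝒜`. -/
theorem stmt11 {A : Type u} [LinearOrder A] [NoMaxOrder A] :
    rcofin ((· ≤ ·) : A → A → Prop) < bcard A := by
  classical
  set κ := rcofin ((· ≤ ·) : A → A → Prop) with hκdef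
  haveI hne : Nonempty {S : Set A // ∀ a : A, ∃ b ∈ S, a ≤ b} :=
    ⟨⟨Set.univ, fun a => ⟨a, trivial, le_rfl⟩⟩⟩
  -- the infimum defining κ is attained
  obtain ⟨S, hS⟩ : ∃ S : {S : Set A // ∀ a : A, ∃ b ∈ S, a ≤ b}, Cardinal.mk S.1 = κ := by
    have h := csInf_mem (Set.range_nonempty
      (fun S : {S : Set A // ∀ a : A, ∃ b ∈ S, a ≤ b} => Cardinal.mk S.1))
    exact h
  have hmin : ∀ T : Set A, (∀ a : A, ∃ b ∈ T, a ≤ b) → κ ≤ Cardinal.mk T := by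
    intro T hT
    exact ciInf_le (OrderBot.bddBelow _) (⟨T, hT⟩ : {S : Set A // ∀ a : A, ∃ b ∈ S, a ≤ b})
  -- any small set is strictly bounded
  have hbdd : ∀ T : Set A, Cardinal.mk T < κ → ∃ u : A, ∀ b ∈ T, b < u := by
    intro T hT
    by_contra hc
    push_neg at hc
    have : κ ≤ Cardinal.mk T := by
      apply hmin
      intro a
      obtain ⟨b, hb, hb2⟩ := hc a
      exact ⟨b, hb, hb2⟩
    exact absurd this (not_le.2 hT)
  -- main lemma: every family of cardinality ≤ κ is dominated
  have key : ∀ B : Set (A → A), Cardinal.mk B ≤ κ → ¬ Unbdd B := by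
    intro B hB
    rcases B.eq_empty_or_nonempty with hBe | hBne
    · intro hU
      exact hU ⟨id, fun g hg => by rw [hBe] at hg; exact absurd hg (Set.notMem_empty g)⟩
    · -- A is nonempty
      haveI hA : Nonempty A := by
        by_contra h
        rw [not_nonempty_iff] at h
        have h0 : κ ≤ 0 := by
          have := hmin ∅ (fun a => isEmptyElim a)
          simpa using this
        have hB0 : Cardinal.mk B = 0 := le_antisymm (hB.trans h0) zero_le
        rw [Cardinal.mk_eq_zero_iff] at hB0
        obtain ⟨g, hg⟩ := hBne
        exact hB0.false ⟨g, hg⟩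
      -- κ is infinite
      have hκinf : Cardinal.aleph0 ≤ κ := by
        by_contra h
        push_neg at h
        have hfin : S.1.Finite := by
          rw [← Cardinal.lt_aleph0_iff_set_finite, hS]
          exact h
        have hSne : S.1.Nonempty := by
          obtain ⟨b, hb, _⟩ := S.2 (Classical.arbitrary A)
          exact ⟨b, hb⟩
        obtain ⟨m, hm, hmax⟩ := Set.Finite.exists_maximalFor id _ hfin hSne
        obtain ⟨c, hc⟩ := exists_gt m
        obtain ⟨b, hb, hcb⟩ := S.2 c
        have hbm : b ≤ m := by
          rcases le_total b m with h' | h'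
          · exact h'
          · exact hmax hb h'
        exact absurd (hc.trans_le (hcb.trans hbm)) (lt_irrefl m)
      -- small initial segments
      have hIio : ∀ i : κ.ord.ToType, Cardinal.mk (Set.Iio i) < κ := fun i =>
        Cardinal.mk_Iio_ord_toType i
      have hIic : ∀ i : κ.ord.ToType, Cardinal.mk {j : κ.ord.ToType | j ≤ i} < κ := by
        intro i
        have hsub : {j : κ.ord.ToType | j ≤ i} ⊆ insert i (Set.Iio i) := by
          intro j hj
          rcases eq_or_lt_of_le (show j ≤ i from hj) with h' | h'
          · exact Or.inl h'
          · exact Or.inr h'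
        calc Cardinal.mk {j : κ.ord.ToType | j ≤ i}
            ≤ Cardinal.mk (insert i (Set.Iio i) : Set κ.ord.ToType) :=
              Cardinal.mk_le_mk_of_subset hsub
          _ ≤ Cardinal.mk (Set.Iio i) + 1 := Cardinal.mk_insert_le
          _ < κ := Cardinal.add_lt_of_lt hκinf (hIio i)
              (lt_of_lt_of_le Cardinal.one_lt_aleph0 hκinf)
      -- enumerate S by κ.ord.ToType
      have hcards : Cardinal.mk κ.ord.ToType = Cardinal.mk S.1 := by
        rw [Cardinal.mk_toType, Cardinal.card_ord, hS]
      let e : κ.ord.ToType ≃ S.1 := Classical.choice (Cardinal.eq.1 hcards)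
      -- build a strictly increasing cofinal sequence
      have hstep : ∀ (i : κ.ord.ToType) (rec : ∀ j, j < i → A),
          ∃ u : A, (∀ j (h : j < i), rec j h < u) ∧ (e i : A) < u := by
        intro i rec
        obtain ⟨u, hu⟩ := hbdd
          (insert ((e i : A)) (Set.range fun j : Set.Iio i => rec j.1 j.2))
          (by
            calc Cardinal.mk (insert ((e i : A))
                  (Set.range fun j : Set.Iio i => rec j.1 j.2) : Set A)
                ≤ Cardinal.mk (Set.range fun j : Set.Iio i => rec j.1 j.2) + 1 :=
                  Cardinal.mk_insert_le
              _ ≤ Cardinal.mk (Set.Iio i) + 1 := by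
                  gcongr
                  exact Cardinal.mk_range_le
              _ < κ := Cardinal.add_lt_of_lt hκinf (hIio i)
                  (lt_of_lt_of_le Cardinal.one_lt_aleph0 hκinf))
        refine ⟨u, fun j h => ?_, hu _ (Set.mem_insert _ _)⟩
        exact hu _ (Set.mem_insert_of_mem _ ⟨⟨j, h⟩, rfl⟩)
      let a : κ.ord.ToType → A := WellFoundedLT.fix (fun i rec => (hstep i rec).choose)
      have ha : ∀ i, a i = (hstep i (fun j _ => a j)).choose := WellFoundedLT.fix_eq _
      have hmono : ∀ j i, j < i → a j < a i := by
        intro j i h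
        rw [ha i]
        exact (hstep i (fun j _ => a j)).choose_spec.1 j h
      have haS : ∀ i, (e i : A) < a i := by
        intro i
        rw [ha i]
        exact (hstep i (fun j _ => a j)).choose_spec.2
      have hacof : ∀ k : A, ∃ i, k ≤ a i := by
        intro k
        obtain ⟨b, hb, hkb⟩ := S.2 k
        refine ⟨e.symm ⟨b, hb⟩, hkb.trans ?_⟩
        have h := haS (e.symm ⟨b, hb⟩)
        rw [Equiv.apply_symm_apply] at h
        exact h.le
      -- enumerate B
      haveI : Nonempty B := hBne.to_subtype
      obtain ⟨f, hfinj⟩ : ∃ f : B → κ.ord.ToType, Function.Injective f := by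
        have : Cardinal.mk B ≤ Cardinal.mk κ.ord.ToType := by
          rw [Cardinal.mk_toType, Cardinal.card_ord]; exact hB
        obtain ⟨emb⟩ := (Cardinal.le_def _ _).1 this
        exact ⟨emb, emb.injective⟩
      set g : κ.ord.ToType → (A → A) := fun i => ((Function.invFun f i : B) : A → A) with hg
      -- construct the dominating function
      have hk' : ∀ k : A, ∃ u : A, ∀ i, i ≤ (hacof k).choose → g i k < u := by
        intro k
        obtain ⟨u, hu⟩ := hbdd
          (Set.range fun i : {i : κ.ord.ToType | i ≤ (hacof k).choose} => g i.1 k)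
          (lt_of_le_of_lt Cardinal.mk_range_le (hIic _))
        exact ⟨u, fun i hi => hu _ ⟨⟨i, hi⟩, rfl⟩⟩
      intro hU
      apply hU
      refine ⟨fun k => (hk' k).choose, ?_⟩
      intro gb hgb
      obtain ⟨i, hi⟩ := Function.invFun_surjective hfinj ⟨gb, hgb⟩
      refine ⟨a i, fun k hk => ?_⟩
      have hle : i ≤ (hacof k).choose := by
        by_contra hlt
        push_neg at hlt
        have h1 := hmono _ _ hlt
        have h2 := (hacof k).choose_spec
        exact absurd (h2.trans h1.le) (not_le.2 hk)
      have hgi : g i = gb := congrArg Subtype.val hi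
      have := (hk' k).choose_spec i hle
      rwa [hgi] at this
  -- the universal family is unbounded
  have huniv : Unbdd (Set.univ : Set (A → A)) := by
    rintro ⟨h, H⟩
    obtain ⟨j, hj⟩ := H h (Set.mem_univ _)
    obtain ⟨k, hk⟩ := exists_gt j
    exact lt_irrefl _ (hj k hk)
  haveI : Nonempty {B : Set (A → A) // Unbdd B} := ⟨⟨Set.univ, huniv⟩⟩
  have hsucc : Order.succ κ ≤ bcard A := by
    refine le_ciInf ?_
    intro B
    refine Order.succ_le_of_lt (lt_of_not_ge fun hle => ?_)
    exact key B.1 hle B.2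
  exact lt_of_lt_of_le (Order.lt_succ κ) hsucc
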